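/- The Σ-derivative of the log tilted partition function: for every probability measure P_X on ℝ, every Σ > 0 and T ∈ ℝ, the function Σ ↦ log Ẑ(Σ,T) is differentiable and 2Σ² · (∂/∂Σ) log Ẑ(Σ,T) = f_c(Σ,T) + ( f_a(Σ,T) − T )². (This is the identity used to show that stationarity of the Bethe free entropy in Σ forces the AMP variance update c = f_c(Σ,T).) -/

import Mathlib

open MeasureTheory

/-- The tilted partition function `Ẑ(Σ,T) = ∫ e^{-(x-T)²/(2Σ)} dP_X(x)`. -/
noncomputable def Zhat (PX : Measure ℝ) (S T : ℝ) : ℝ :=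
  ∫ x, Real.exp (-(x - T) ^ 2 / (2 * S)) ∂PX

/-- The input mean function `f_a(Σ,T)`. -/
noncomputable def fa (PX : Measure ℝ) (S T : ℝ) : ℝ :=
  (∫ x, x * Real.exp (-(x - T) ^ 2 / (2 * S)) ∂PX) / Zhat PX S T

/-- The input variance function `f_c(Σ,T)`. -/
noncomputable def fc (PX : Measure ℝ) (S T : ℝ) : ℝ :=
  (∫ x, x ^ 2 * Real.exp (-(x - T) ^ 2 / (2 * S)) ∂PX) / Zhat PX S T - (fa PX S T) ^ 2

lemma integrable_of_bound (PX : Measure ℝ) [IsProbabilityMeasure PX] (f : ℝ → ℝ)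
    (hf : Continuous f) (C : ℝ) (h : ∀ x, |f x| ≤ C) : Integrable f PX :=
  (integrable_const C).mono' hf.aestronglyMeasurable (Filter.Eventually.of_forall h)

lemma exp_le_one' (u s : ℝ) (hu : 0 ≤ u) (hs : 0 < s) : Real.exp (-u / (2*s)) ≤ 1 := by
  apply Real.exp_le_one_iff.mpr
  rw [neg_div]
  have : 0 ≤ u / (2*s) := by positivity
  linarith

lemma mul_exp_le (u s : ℝ) (hu : 0 ≤ u) (hs : 0 < s) :
    u / (2*s^2) * Real.exp (-u / (2*s)) ≤ 1 / s := by
  have h1 : u / (2*s) * Real.exp (-(u/(2*s))) ≤ 1 := by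
    rw [Real.exp_neg, mul_inv_le_iff₀ (Real.exp_pos _), one_mul]
    linarith [Real.add_one_le_exp (u/(2*s))]
  have heq : u / (2*s^2) * Real.exp (-u / (2*s)) = (1/s) * (u / (2*s) * Real.exp (-(u/(2*s)))) := by
    rw [neg_div]; ring
  rw [heq]
  calc (1/s) * (u / (2*s) * Real.exp (-(u/(2*s)))) ≤ (1/s) * 1 :=
        mul_le_mul_of_nonneg_left h1 (by positivity)
    _ = 1/s := mul_one _

lemma hasDerivAt_pt (T x : ℝ) (s : ℝ) (hs : 0 < s) :
    HasDerivAt (fun s => Real.exp (-(x - T) ^ 2 / (2 * s)))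
      ((x-T)^2 / (2*s^2) * Real.exp (-(x - T) ^ 2 / (2 * s))) s := by
  have h1 : HasDerivAt (fun s : ℝ => -(x - T) ^ 2 / (2 * s)) ((x-T)^2 / (2*s^2)) s := by
    have h := (hasDerivAt_inv (ne_of_gt hs)).const_mul (-(x - T) ^ 2 / 2)
    have e1 : (fun s : ℝ => -(x - T) ^ 2 / (2 * s)) = fun y : ℝ => -(x - T) ^ 2 / 2 * y⁻¹ := by
      funext y; field_simp
    have e2 : (x-T)^2 / (2*s^2) = -(x - T) ^ 2 / 2 * -(s ^ 2)⁻¹ := by field_simp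
    rw [e1, e2]; exact h
  simpa [mul_comm] using h1.exp

lemma cont_exp (T s : ℝ) : Continuous (fun x : ℝ => Real.exp (-(x - T) ^ 2 / (2 * s))) := by
  continuity

lemma hasDerivAt_Zhat (PX : Measure ℝ) [IsProbabilityMeasure PX] (S : ℝ) (hS : 0 < S) (T : ℝ) :
    HasDerivAt (fun s => Zhat PX s T)
      (∫ x, (x-T)^2 / (2*S^2) * Real.exp (-(x - T) ^ 2 / (2 * S)) ∂PX) S := by
  have key := hasDerivAt_integral_of_dominated_loc_of_deriv_le (μ := PX)
    (F := fun s x => Real.exp (-(x - T) ^ 2 / (2 * s)))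
    (F' := fun s x => (x-T)^2 / (2*s^2) * Real.exp (-(x - T) ^ 2 / (2 * s)))
    (x₀ := S) (bound := fun _ => 2 / S) (s := Metric.ball S (S/2)) (Metric.ball_mem_nhds S (by linarith))
    (Filter.Eventually.of_forall fun s => (cont_exp T s).aestronglyMeasurable)
    (integrable_of_bound PX _ (cont_exp T S) 1 (fun x => by
      rw [abs_of_pos (Real.exp_pos _)]
      exact exp_le_one' ((x-T)^2) S (sq_nonneg _) hS))
    (((continuous_id.sub continuous_const).pow 2 |>.div_const _ |>.mul
      (cont_exp T S)).aestronglyMeasurable)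
    (Filter.Eventually.of_forall fun x s hsb => by
      have hs2 : S/2 < s := by
        have := abs_lt.mp (mem_ball_iff_norm.mp hsb)
        linarith [this.1]
      have hs : 0 < s := by linarith
      have hnn : 0 ≤ (x-T)^2 / (2*s^2) * Real.exp (-(x - T) ^ 2 / (2 * s)) := by positivity
      rw [Real.norm_eq_abs, abs_of_nonneg hnn]
      calc (x-T)^2 / (2*s^2) * Real.exp (-(x - T) ^ 2 / (2 * s)) ≤ 1/s :=
            mul_exp_le ((x-T)^2) s (sq_nonneg _) hs
        _ ≤ 2/S := by
            rw [div_le_div_iff₀ hs (by linarith)]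
            linarith
      )
    (integrable_const _)
    (Filter.Eventually.of_forall fun x s hsb => by
      have hs2 : S/2 < s := by
        have := abs_lt.mp (mem_ball_iff_norm.mp hsb)
        linarith [this.1]
      exact hasDerivAt_pt T x s (by linarith))
  exact key.2

lemma Zhat_pos (PX : Measure ℝ) [IsProbabilityMeasure PX] (S : ℝ) (hS : 0 < S) (T : ℝ) :
    0 < Zhat PX S T := by
  rw [Zhat, integral_pos_iff_support_of_nonneg (fun x => (Real.exp_pos _).le)
    (integrable_of_bound PX _ (cont_exp T S) 1 (fun x => by
      rw [abs_of_pos (Real.exp_pos _)]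
      exact exp_le_one' ((x-T)^2) S (sq_nonneg _) hS))]
  have hsupp : Function.support (fun x : ℝ => Real.exp (-(x - T) ^ 2 / (2 * S))) = Set.univ := by
    ext x; simp [Function.support, (Real.exp_pos _).ne']
  rw [hsupp]
  simp

/-- The `Σ`-derivative of the log tilted partition function:
`2Σ² ∂_Σ log Ẑ(Σ,T) = f_c(Σ,T) + (f_a(Σ,T) − T)²`. -/
theorem two_S_sq_deriv_log_Zhat (PX : Measure ℝ) [IsProbabilityMeasure PX]
    (S : ℝ) (hS : 0 < S) (T : ℝ) :
    DifferentiableAt ℝ (fun s => Real.log (Zhat PX s T)) S ∧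
      2 * S ^ 2 * deriv (fun s => Real.log (Zhat PX s T)) S =
        fc PX S T + (fa PX S T - T) ^ 2 := by
  have hZ := Zhat_pos PX S hS T
  have hD := hasDerivAt_Zhat PX S hS T
  have hlog := hD.log hZ.ne'
  refine ⟨hlog.differentiableAt, ?_⟩
  rw [hlog.deriv]
  -- integrability facts
  have hbe : ∀ x : ℝ, Real.exp (-(x - T) ^ 2 / (2 * S)) ≤ 1 :=
    fun x => exp_le_one' ((x-T)^2) S (sq_nonneg _) hS
  have hue : ∀ x : ℝ, (x-T)^2 * Real.exp (-(x - T) ^ 2 / (2 * S)) ≤ 2*S := by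
    intro x
    have := mul_exp_le ((x-T)^2) S (sq_nonneg _) hS
    have h3 : (x-T)^2 * Real.exp (-(x - T) ^ 2 / (2 * S))
        = (2*S^2) * ((x-T)^2 / (2*S^2) * Real.exp (-(x - T) ^ 2 / (2 * S))) := by
      field_simp
    rw [h3]
    calc (2*S^2) * ((x-T)^2 / (2*S^2) * Real.exp (-(x - T) ^ 2 / (2 * S)))
        ≤ (2*S^2) * (1/S) := mul_le_mul_of_nonneg_left this (by positivity)
      _ = 2*S := by field_simp
  have hx2 : ∀ x : ℝ, x^2 * Real.exp (-(x - T) ^ 2 / (2 * S)) ≤ 4*S + 2*T^2 := by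
    intro x
    have hE := Real.exp_pos (-(x - T) ^ 2 / (2 * S))
    have h1 := hue x
    have h2 := hbe x
    nlinarith [sq_nonneg (x - 2*T), sq_nonneg x]
  have hint0 : Integrable (fun x : ℝ => Real.exp (-(x - T) ^ 2 / (2 * S))) PX :=
    integrable_of_bound PX _ (cont_exp T S) 1 (fun x => by
      rw [abs_of_pos (Real.exp_pos _)]; exact hbe x)
  have hint2 : Integrable (fun x : ℝ => x^2 * Real.exp (-(x - T) ^ 2 / (2 * S))) PX :=
    integrable_of_bound PX _ (by continuity) (4*S + 2*T^2) (fun x => by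
      rw [abs_of_nonneg (by positivity)]; exact hx2 x)
  have hint1 : Integrable (fun x : ℝ => x * Real.exp (-(x - T) ^ 2 / (2 * S))) PX :=
    integrable_of_bound PX _ (by continuity) (4*S + 2*T^2 + 1) (fun x => by
      have hE := Real.exp_pos (-(x - T) ^ 2 / (2 * S))
      rw [abs_mul, abs_of_pos hE]
      have h1 : |x| * Real.exp (-(x - T) ^ 2 / (2 * S)) ≤
          (x^2 + 1) * Real.exp (-(x - T) ^ 2 / (2 * S)) := by
        apply mul_le_mul_of_nonneg_right _ hE.le
        nlinarith [abs_nonneg x, sq_abs x, sq_nonneg (|x| - 1)]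
      have h2 := hx2 x
      have h3 := hbe x
      nlinarith)
  -- compute the derivative integral
  have hI : (∫ x, (x-T)^2 / (2*S^2) * Real.exp (-(x - T) ^ 2 / (2 * S)) ∂PX)
      = (1/(2*S^2)) * ((∫ x, x^2 * Real.exp (-(x - T) ^ 2 / (2 * S)) ∂PX)
        - 2*T*(∫ x, x * Real.exp (-(x - T) ^ 2 / (2 * S)) ∂PX)
        + T^2 * (Zhat PX S T)) := by
    have e1 : (fun x : ℝ => (x-T)^2 / (2*S^2) * Real.exp (-(x - T) ^ 2 / (2 * S)))
        = fun x : ℝ => ((1/(2*S^2)) * (x^2 * Real.exp (-(x - T) ^ 2 / (2 * S)))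
            - (T/S^2) * (x * Real.exp (-(x - T) ^ 2 / (2 * S))))
            + (T^2/(2*S^2)) * Real.exp (-(x - T) ^ 2 / (2 * S)) := by
      funext x
      field_simp
      ring
    have haux : Integrable (fun x : ℝ => (1/(2*S^2)) * (x^2 * Real.exp (-(x - T) ^ 2 / (2 * S)))
        - (T/S^2) * (x * Real.exp (-(x - T) ^ 2 / (2 * S)))) PX :=
      (hint2.const_mul _).sub (hint1.const_mul _)
    have haux2 : Integrable (fun x : ℝ =>
        (T^2/(2*S^2)) * Real.exp (-(x - T) ^ 2 / (2 * S))) PX := hint0.const_mul _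
    have haux3 : Integrable (fun x : ℝ =>
        (1/(2*S^2)) * (x^2 * Real.exp (-(x - T) ^ 2 / (2 * S)))) PX := hint2.const_mul _
    have haux4 : Integrable (fun x : ℝ =>
        (T/S^2) * (x * Real.exp (-(x - T) ^ 2 / (2 * S)))) PX := hint1.const_mul _
    rw [e1, integral_add haux haux2, integral_sub haux3 haux4, integral_const_mul,
      integral_const_mul, integral_const_mul, Zhat]
    field_simp
  rw [hI, fc, fa, Zhat] at *
  set A := ∫ x, x^2 * Real.exp (-(x - T) ^ 2 / (2 * S)) ∂PX
  set B := ∫ x, x * Real.exp (-(x - T) ^ 2 / (2 * S)) ∂PX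
  set Z := ∫ x, Real.exp (-(x - T) ^ 2 / (2 * S)) ∂PX
  field_simp
  ring
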